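/- In the lower-bound instance for strategyproofness with parameter l, the optimal execution performs exactly l² + l exchanges, and any execution in which every agent receives at most one item performs at most 2l exchanges; hence any algorithm that allocates each agent at most one item has approximation ratio at least (l+1)/2 on this instance. -/

import Mathlib

structure TState (N M : Type) where
  own : N → Finset M
  dem : N → Finset M

variable {N M : Type} [DecidableEq N] [DecidableEq M]

/-- In a trading cycle `c = [(i₁,j₁),…,(i_k,j_k)]`, agent `i_t` receives item `j_t`;
`gives c` pairs each agent with the item he gives, namely `j_{t-1}` (cyclically). -/
def gives (c : List (N × M)) : List (N × M) :=
  (c.map Prod.fst).zip ((c.rotate (c.length - 1)).map Prod.snd)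

/-- A valid cycle step: nonempty, visits each agent and each item at most once,
every participating agent receives an item he currently demands and gives an item
he currently owns. -/
def ValidCycle (s : TState N M) (c : List (N × M)) : Prop :=
  c ≠ [] ∧ (c.map Prod.fst).Nodup ∧ (c.map Prod.snd).Nodup ∧
    (∀ p ∈ c, p.2 ∈ s.dem p.1) ∧ (∀ p ∈ gives c, p.2 ∈ s.own p.1)

/-- The state after executing a cycle: every used demand edge is reversed into a
supply edge (the received item moves into the agent's supply and leaves his demand),
and every used supply edge is removed. -/
def stepCycle (s : TState N M) (c : List (N × M)) : TState N M where
  own i := ((s.own i).filter fun j => (i, j) ∉ gives c) ∪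
      ((c.filter fun p => decide (p.1 = i)).map Prod.snd).toFinset
  dem i := (s.dem i).filter fun j => (i, j) ∉ c

/-- An execution is a sequence of cycle steps, each valid in the successively
updated state. -/
def ValidExec (s : TState N M) : List (List (N × M)) → Prop
  | [] => True
  | c :: r => ValidCycle s c ∧ ValidExec (stepCycle s c) r

/-- Total number of exchanges (items received) in an execution. -/
def exchanges (r : List (List (N × M))) : ℕ := (r.map List.length).sum

/-- Number of items agent `i` receives during execution `r`. -/
def receivedCount (r : List (List (N × M))) (i : N) : ℕ :=
  (r.map fun c => c.countP fun p => decide (p.1 = i)).sum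

/-- Number of items agent `i` gives during execution `r`. -/
def givenCount (r : List (List (N × M))) (i : N) : ℕ :=
  (r.map fun c => (gives c).countP fun p => decide (p.1 = i)).sum

/-- A static execution allocates each item at most once. -/
def StaticExec (r : List (List (N × M))) : Prop := (r.flatten.map Prod.snd).Nodup

/-- Agents of the lower-bound instance: `Sum.inl k` is `i_k ∈ N`,
`Sum.inr (Sum.inl k)` is `i'_k ∈ N'`, and `Sum.inr (Sum.inr (k,t))` is the `t`-th
path agent of the `k`-th path. -/
abbrev LBAg (l P : ℕ) := Fin l ⊕ (Fin l ⊕ Fin l × Fin P)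

/-- Items: `Sum.inl k` is `j_k ∈ M`, `Sum.inr (Sum.inl k)` is `j'_k ∈ M'`, and
`Sum.inr (Sum.inr (k,t))` is the `t`-th path item of the `k`-th path. -/
abbrev LBIt (l P : ℕ) := Fin l ⊕ (Fin l ⊕ Fin l × Fin P)

/-- Supply sets: `i_k` owns `j'_k`, `i'_k` owns `j_k`, path agent `(k,t)` owns path
item `(k,t)`. -/
def LBS (l P : ℕ) : LBAg l P → Finset (LBIt l P)
  | .inl k => {.inr (.inl k)}
  | .inr (.inl k) => {.inl k}
  | .inr (.inr (k, t)) => {.inr (.inr (k, t))}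

/-- Demand sets: `i_k` demands all of `M`, `i'_k` demands only `j'_k`, and path
agent `(k,t)` demands the next item on its path (ending at `j'_k`). -/
def LBD (l P : ℕ) : LBAg l P → Finset (LBIt l P)
  | .inl _ => Finset.univ.image Sum.inl
  | .inr (.inl k) => {.inr (.inl k)}
  | .inr (.inr (k, t)) =>
      if h : t.val + 1 < P then {.inr (.inr (k, ⟨t.val + 1, h⟩))} else {.inr (.inl k)}

set_option linter.unusedSectionVars false
theorem TState.ext' {s t : TState N M} (h1 : ∀ i, s.own i = t.own i)
    (h2 : ∀ i, s.dem i = t.dem i) : s = t := by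
  cases s; cases t
  simp only [TState.mk.injEq]
  exact ⟨funext h1, funext h2⟩

theorem map_fst_gives (c : List (N × M)) : (gives c).map Prod.fst = c.map Prod.fst := by
  apply List.map_fst_zip
  simp

theorem map_snd_gives (c : List (N × M)) :
    (gives c).map Prod.snd = (c.rotate (c.length - 1)).map Prod.snd := by
  apply List.map_snd_zip
  simp

theorem snd_gives_mem {c : List (N × M)} {p : N × M} (h : p ∈ gives c) :
    ∃ q ∈ c, q.2 = p.2 := by
  have : p.2 ∈ (gives c).map Prod.snd := List.mem_map_of_mem h
  rw [map_snd_gives] at this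
  obtain ⟨q, hq, hq2⟩ := List.mem_map.1 this
  exact ⟨q, List.mem_rotate.1 hq, hq2⟩

theorem fst_gives_mem {c : List (N × M)} {p : N × M} (h : p ∈ c) :
    ∃ q ∈ gives c, q.1 = p.1 := by
  have h1 : p.1 ∈ (gives c).map Prod.fst := by
    rw [map_fst_gives]; exact List.mem_map_of_mem h
  obtain ⟨q, hq, hq1⟩ := List.mem_map.1 h1
  exact ⟨q, hq, hq1⟩

theorem countP_fst_le_one {c : List (N × M)} (h : (c.map Prod.fst).Nodup) (i : N) :
    c.countP (fun p => decide (p.1 = i)) ≤ 1 := by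
  have := List.nodup_iff_count_le_one.1 h i
  rwa [List.count, List.countP_map] at this
  

theorem receivedCount_le_card_dem (s : TState N M) (r : List (List (N × M)))
    (hv : ValidExec s r) (i : N) : receivedCount r i ≤ (s.dem i).card := by
  induction r generalizing s with
  | nil => simp [receivedCount]
  | cons c r ih =>
    obtain ⟨hc, hr⟩ := hv
    have hrc : receivedCount (c :: r) i
        = c.countP (fun p => decide (p.1 = i)) + receivedCount r i := by
      simp [receivedCount]
    rw [hrc]
    have hle := countP_fst_le_one hc.2.1 i
    have htail := ih _ hr
    rcases Nat.eq_zero_or_pos (c.countP (fun p => decide (p.1 = i))) with h0 | hpos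
    · rw [h0, Nat.zero_add]
      refine htail.trans (Finset.card_le_card ?_)
      intro j hj
      exact (Finset.mem_filter.1 hj).1
    · obtain ⟨p, hp, hpi⟩ := List.countP_pos_iff.1 hpos
      have hpi : p.1 = i := by simpa using hpi
      have hdem : p.2 ∈ s.dem i := hpi ▸ hc.2.2.2.1 p hp
      have hsub : (stepCycle s c).dem i ⊆ (s.dem i).erase p.2 := by
        intro j hj
        simp only [stepCycle, Finset.mem_filter] at hj
        refine Finset.mem_erase.2 ⟨?_, hj.1⟩
        intro hje
        exact hj.2 (by simpa using hje ▸ hpi ▸ hp)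
      have := htail.trans (Finset.card_le_card hsub)
      rw [Finset.card_erase_of_mem hdem] at this
      have hpos' : 1 ≤ (s.dem i).card := Finset.card_pos.2 ⟨p.2, hdem⟩
      omega

theorem sum_countP_fst [Fintype N] (c : List (N × M)) :
    ∑ i : N, c.countP (fun p => decide (p.1 = i)) = c.length := by
  induction c with
  | nil => simp
  | cons p c ihc =>
    simp only [List.countP_cons, List.length_cons]
    rw [Finset.sum_add_distrib, ihc]
    have : ∑ i : N, (if decide (p.1 = i) = true then 1 else 0) = 1 := by simp
    omega

theorem exchanges_eq_sum [Fintype N] (r : List (List (N × M))) :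
    exchanges r = ∑ i : N, receivedCount r i := by
  induction r with
  | nil => simp [exchanges, receivedCount]
  | cons c r ih =>
    have : ∑ i : N, receivedCount (c :: r) i
        = ∑ i : N, (c.countP (fun p => decide (p.1 = i)) + receivedCount r i) := by
      apply Finset.sum_congr rfl; intro i _; simp [receivedCount]
    rw [this, Finset.sum_add_distrib, ← ih]
    simp [exchanges, sum_countP_fst]

theorem validExec_append {s : TState N M} {a b : List (List (N × M))} :
    ValidExec s (a ++ b) ↔ ValidExec s a ∧ ValidExec (a.foldl stepCycle s) b := by
  induction a generalizing s with
  | nil => simp [ValidExec]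
  | cons c a ih => simp [ValidExec, ih, and_assoc]

variable {l P : ℕ}

/-- Invariant: path agents own exactly their path item, and a path item can only be
demanded by the previous path agent. -/
def Good (s : TState (LBAg l P) (LBIt l P)) : Prop :=
  (∀ x : Fin l × Fin P, s.own (.inr (.inr x)) = {.inr (.inr x)}) ∧
  (∀ (x : Fin l × Fin P) (i : LBAg l P), (.inr (.inr x) : LBIt l P) ∈ s.dem i →
    0 < x.2.val ∧ i = .inr (.inr (x.1, ⟨x.2.val - 1, by omega⟩)))

theorem good_init : Good (⟨LBS l P, LBD l P⟩ : TState (LBAg l P) (LBIt l P)) := by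
  constructor
  · intro x; cases x; rfl
  · rintro ⟨k, t⟩ i h
    match i with
    | .inl k' => simp [LBD] at h
    | .inr (.inl k') => simp [LBD] at h
    | .inr (.inr (k', t')) =>
      simp only [LBD] at h
      split at h
      · simp only [Finset.mem_singleton, Sum.inr.injEq, Prod.mk.injEq] at h
        obtain ⟨hk, ht⟩ := h
        subst ht
        refine ⟨Nat.succ_pos _, ?_⟩
        simp only [Sum.inr.injEq, Prod.mk.injEq]
        exact ⟨hk.symm, by apply Fin.ext; simp⟩
      · simp at h

theorem no_path_agent {s : TState (LBAg l P) (LBIt l P)} (hg : Good s)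
    {c : List (LBAg l P × LBIt l P)} (hc : ValidCycle s c) :
    ∀ p ∈ c, ∀ x : Fin l × Fin P, p.1 ≠ .inr (.inr x) := by
  -- strong induction on x.2.val
  suffices h : ∀ n (x : Fin l × Fin P), x.2.val = n → ∀ p ∈ c, p.1 ≠ .inr (.inr x) by
    intro p hp x hx; exact h x.2.val x rfl p hp hx
  intro n
  induction n using Nat.strong_induction_on with
  | _ n ih =>
    rintro ⟨k, t⟩ rfl p hp hp1
    -- p.1 = path agent (k,t); it gives an item it owns, which must be item (k,t)
    obtain ⟨q, hq, hq1⟩ := fst_gives_mem hp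
    have hown := hc.2.2.2.2 q hq
    rw [hq1, hp1, hg.1] at hown
    have hq2 : q.2 = .inr (.inr (k, t)) := Finset.mem_singleton.1 hown
    -- item (k,t) is received by someone in c
    obtain ⟨q', hq', hq'2⟩ := snd_gives_mem hq
    rw [hq2] at hq'2
    have hdem := hc.2.2.2.1 q' hq'
    rw [hq'2] at hdem
    obtain ⟨ht, hi⟩ := hg.2 (k, t) q'.1 hdem
    have ht' : 0 < t.val := ht
    exact ih (t.val - 1) (by show t.val - 1 < t.val; omega) _ rfl q' hq' hi

theorem good_step {s : TState (LBAg l P) (LBIt l P)} (hg : Good s)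
    {c : List (LBAg l P × LBIt l P)} (hc : ValidCycle s c) :
    Good (stepCycle s c) := by
  have hnp := no_path_agent hg hc
  constructor
  · intro x
    have hx1 : ∀ j, ((.inr (.inr x) : LBAg l P), j) ∉ gives c := by
      intro j hj
      obtain ⟨q', hq', hq'1⟩ : ∃ q' ∈ c, q'.1 = (.inr (.inr x) : LBAg l P) := by
        have : (Sum.inr (Sum.inr x) : LBAg l P) ∈ (gives c).map Prod.fst :=
          List.mem_map.2 ⟨_, hj, rfl⟩
        rw [map_fst_gives] at this
        obtain ⟨q', hq', h1⟩ := List.mem_map.1 this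
        exact ⟨q', hq', h1⟩
      exact hnp q' hq' x hq'1
    have hx2 : (c.filter fun p => decide (p.1 = (.inr (.inr x) : LBAg l P))) = [] := by
      rw [List.filter_eq_nil_iff]
      intro p hp
      simp only [decide_eq_true_eq]
      intro h; exact hnp p hp x h
    ext j
    simp only [stepCycle, hx2, List.map_nil, List.toFinset_nil, Finset.union_empty,
      Finset.mem_filter, hg.1, Finset.mem_singleton]
    exact ⟨fun h => h.1, fun h => ⟨h, hx1 j⟩⟩
  · intro x i h
    simp only [stepCycle, Finset.mem_filter] at h
    exact hg.2 x i h.1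

theorem receivedCount_path_eq_zero {s : TState (LBAg l P) (LBIt l P)} (hg : Good s)
    {r : List (List (LBAg l P × LBIt l P))} (hv : ValidExec s r) (x : Fin l × Fin P) :
    receivedCount r (.inr (.inr x)) = 0 := by
  induction r generalizing s with
  | nil => simp [receivedCount]
  | cons c r ih =>
    obtain ⟨hc, hr⟩ := hv
    have h0 : c.countP (fun p => decide (p.1 = (.inr (.inr x) : LBAg l P))) = 0 := by
      rw [List.countP_eq_zero]
      intro p hp
      simp only [decide_eq_true_eq]
      intro h; exact no_path_agent hg hc p hp x h
    have := ih (good_step hg hc) hr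
    simp only [receivedCount, List.map_cons, List.sum_cons] at this ⊢
    rw [h0, Nat.zero_add]
    exact this

theorem split_sum (r : List (List (LBAg l P × LBIt l P)))
    (hv : ValidExec ⟨LBS l P, LBD l P⟩ r) :
    exchanges r = (∑ k : Fin l, receivedCount r (.inl k)) +
      ∑ k : Fin l, receivedCount r (.inr (.inl k)) := by
  rw [exchanges_eq_sum, Fintype.sum_sum_type]
  congr 1
  rw [Fintype.sum_sum_type]
  have : ∑ x : Fin l × Fin P, receivedCount r (.inr (.inr x)) = 0 := by
    apply Finset.sum_eq_zero
    intro x _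
    exact receivedCount_path_eq_zero good_init hv x
  rw [this, Nat.add_zero]

theorem part2 (hl : 1 ≤ l) (r : List (List (LBAg l P × LBIt l P)))
    (hv : ValidExec ⟨LBS l P, LBD l P⟩ r) : exchanges r ≤ l * l + l := by
  rw [split_sum r hv]
  have h1 : ∀ k : Fin l, receivedCount r (.inl k) ≤ l := by
    intro k
    have := receivedCount_le_card_dem _ r hv (.inl k)
    have hcard : ((⟨LBS l P, LBD l P⟩ : TState (LBAg l P) (LBIt l P)).dem (.inl k)).card = l := by
      show (Finset.univ.image (Sum.inl : Fin l → LBIt l P)).card = l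
      rw [Finset.card_image_of_injective _ Sum.inl_injective, Finset.card_univ, Fintype.card_fin]
    omega
  have h2 : ∀ k : Fin l, receivedCount r (.inr (.inl k)) ≤ 1 := by
    intro k
    have := receivedCount_le_card_dem _ r hv (.inr (.inl k))
    have hcard : ((⟨LBS l P, LBD l P⟩ : TState (LBAg l P) (LBIt l P)).dem (.inr (.inl k))).card = 1 := by
      show ({(.inr (.inl k) : LBIt l P)} : Finset _).card = 1
      simp
    omega
  calc (∑ k : Fin l, receivedCount r (.inl k)) + ∑ k : Fin l, receivedCount r (.inr (.inl k))
      ≤ (∑ _k : Fin l, l) + ∑ _k : Fin l, 1 := by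
        gcongr <;> [exact h1 _; exact h2 _]
    _ = l * l + l := by simp [Finset.sum_const, Finset.card_univ, Nat.mul_comm]

theorem part3 (r : List (List (LBAg l P × LBIt l P)))
    (hv : ValidExec ⟨LBS l P, LBD l P⟩ r) (hone : ∀ i, receivedCount r i ≤ 1) :
    exchanges r ≤ 2 * l := by
  rw [split_sum r hv]
  calc (∑ k : Fin l, receivedCount r (.inl k)) + ∑ k : Fin l, receivedCount r (.inr (.inl k))
      ≤ (∑ _k : Fin l, 1) + ∑ _k : Fin l, 1 := by
        gcongr <;> [exact hone _; exact hone _]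
    _ = 2 * l := by simp [Finset.sum_const, Finset.card_univ]; ring

/-! ### The optimal execution -/

theorem mem_own_step {s : TState N M} {c : List (N × M)} {i : N} {j : M} :
    j ∈ (stepCycle s c).own i ↔
      (j ∈ s.own i ∧ (i, j) ∉ gives c) ∨ ∃ p ∈ c, p.1 = i ∧ p.2 = j := by
  simp only [stepCycle, Finset.mem_union, Finset.mem_filter, List.mem_toFinset,
    List.mem_map, List.mem_filter, decide_eq_true_eq]
  constructor
  · rintro (h | ⟨p, ⟨hp, h1⟩, h2⟩)
    · exact Or.inl h
    · exact Or.inr ⟨p, hp, h1, h2⟩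
  · rintro (h | ⟨p, hp, h1, h2⟩)
    · exact Or.inl h
    · exact Or.inr ⟨p, ⟨hp, h1⟩, h2⟩

theorem mem_dem_step {s : TState N M} {c : List (N × M)} {i : N} {j : M} :
    j ∈ (stepCycle s c).dem i ↔ j ∈ s.dem i ∧ (i, j) ∉ c := by
  simp [stepCycle]

section construction

variable (l P : ℕ)

/-- The swap cycle between `i_k` and `i'_k`. -/
def swCyc (k : Fin l) : List (LBAg l P × LBIt l P) :=
  [(.inl k, .inl k), (.inr (.inl k), .inr (.inl k))]

/-- State after the first `t` swaps. -/
def Sw (t : ℕ) : TState (LBAg l P) (LBIt l P) where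
  own := fun i => match i with
    | .inl k => if k.val < t then {.inl k} else {.inr (.inl k)}
    | .inr (.inl k) => if k.val < t then {.inr (.inl k)} else {.inl k}
    | .inr (.inr x) => {.inr (.inr x)}
  dem := fun i => match i with
    | .inl k => if k.val < t then (Finset.univ.image Sum.inl).erase (.inl k)
        else Finset.univ.image Sum.inl
    | .inr (.inl k) => if k.val < t then ∅ else {.inr (.inl k)}
    | .inr (.inr x) => LBD l P (.inr (.inr x))

theorem Sw_zero : Sw l P 0 = ⟨LBS l P, LBD l P⟩ := by
  apply TState.ext' <;> intro i <;>
    rcases i with k | k | x <;> simp [Sw, LBS, LBD]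

theorem gives_swCyc (k : Fin l) :
    gives (swCyc l P k) = [(.inl k, .inr (.inl k)), (.inr (.inl k), .inl k)] := rfl

theorem gives_pair {N M : Type} (a b : N × M) : gives [a, b] = [(a.1, b.2), (b.1, a.2)] := rfl

theorem validCycle_swCyc (k : Fin l) : ValidCycle (Sw l P k.val) (swCyc l P k) := by
  refine ⟨by simp [swCyc], by simp [swCyc], by simp [swCyc], ?_, ?_⟩
  · intro p hp
    simp only [swCyc, List.mem_cons, List.not_mem_nil, or_false] at hp
    rcases hp with rfl | rfl <;> simp [Sw]
  · intro p hp
    rw [gives_swCyc] at hp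
    simp only [List.mem_cons, List.not_mem_nil, or_false] at hp
    rcases hp with rfl | rfl <;> simp [Sw]

theorem step_swCyc (k : Fin l) :
    stepCycle (Sw l P k.val) (swCyc l P k) = Sw l P (k.val + 1) := by
  apply TState.ext' <;> intro i <;> rcases i with k' | k' | x <;> ext j
  · -- own, i = inl k'
    by_cases hk : k' = k
    · subst hk
      simp only [mem_own_step, gives_swCyc, swCyc, Sw, gives_pair]
      simp [List.mem_cons]
      tauto
    · have hv : k'.val ≠ k.val := fun h => hk (Fin.ext h)
      have hlt : (k'.val < k.val) ↔ (k'.val < k.val + 1) := by omega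
      simp only [mem_own_step, gives_swCyc, swCyc, Sw, gives_pair, hlt]
      simp [List.mem_cons, hk, Ne.symm hk, fun h => hk (Sum.inl_injective h)]
  · -- own, i = inr (inl k')
    by_cases hk : k' = k
    · subst hk
      simp only [mem_own_step, gives_swCyc, swCyc, Sw, gives_pair]
      simp [List.mem_cons]
      tauto
    · have hv : k'.val ≠ k.val := fun h => hk (Fin.ext h)
      have hlt : (k'.val < k.val) ↔ (k'.val < k.val + 1) := by omega
      simp only [mem_own_step, gives_swCyc, swCyc, Sw, gives_pair, hlt]
      simp [List.mem_cons, hk, Ne.symm hk]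
  · -- own, path agent
    simp only [mem_own_step, gives_swCyc, swCyc, Sw, gives_pair]
    simp [List.mem_cons]
  · -- dem, i = inl k'
    by_cases hk : k' = k
    · subst hk
      simp only [mem_dem_step, swCyc, Sw]
      simp [List.mem_cons]
      tauto
    · have hv : k'.val ≠ k.val := fun h => hk (Fin.ext h)
      have hlt : (k'.val < k.val) ↔ (k'.val < k.val + 1) := by omega
      simp only [mem_dem_step, swCyc, Sw, hlt]
      simp [List.mem_cons, hk, Ne.symm hk, fun h => hk (Sum.inl_injective h)]
  · -- dem, i = inr (inl k')
    by_cases hk : k' = k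
    · subst hk
      simp only [mem_dem_step, swCyc, Sw]
      simp [List.mem_cons]
    · have hv : k'.val ≠ k.val := fun h => hk (Fin.ext h)
      have hlt : (k'.val < k.val) ↔ (k'.val < k.val + 1) := by omega
      simp only [mem_dem_step, swCyc, Sw, hlt]
      simp [List.mem_cons, hk, Ne.symm hk]
  · -- dem, path agent
    simp only [mem_dem_step, swCyc, Sw]
    simp [List.mem_cons]

theorem exec_swaps : ∀ n t, t + n = l →
    ValidExec (Sw l P t) (((List.finRange l).drop t).map (swCyc l P)) ∧
      ((((List.finRange l).drop t).map (swCyc l P)).foldl stepCycle (Sw l P t)) = Sw l P l := by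
  intro n
  induction n with
  | zero =>
    intro t ht
    have h1 : ((List.finRange l).drop t) = [] := by
      apply List.drop_eq_nil_of_le; simp; omega
    have h2 : t = l := by omega
    rw [h1]
    exact ⟨trivial, by rw [h2]; rfl⟩
  | succ n ih =>
    intro t ht
    have htl : t < l := by omega
    have hdrop : ((List.finRange l).drop t) = ⟨t, htl⟩ :: ((List.finRange l).drop (t + 1)) := by
      rw [List.drop_eq_getElem_cons (by simpa using htl)]
      congr 1
      simp [List.getElem_finRange]
    rw [hdrop, List.map_cons]
    have hvc := validCycle_swCyc l P ⟨t, htl⟩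
    have hst := step_swCyc l P ⟨t, htl⟩
    obtain ⟨ih1, ih2⟩ := ih (t + 1) (by omega)
    refine ⟨⟨hvc, ?_⟩, ?_⟩
    · rw [hst]; exact ih1
    · simp only [List.foldl_cons, hst]; exact ih2

@[simp] theorem length_swCyc (k : Fin l) : (swCyc l P k).length = 2 := rfl

end construction

section rounds

variable (l P : ℕ) [NeZero l]
open Fin.NatCast

/-- The `m`-th circulation cycle: agent `i_k` receives `j_{k+m+1}`. -/
def rdCyc (m : ℕ) : List (LBAg l P × LBIt l P) :=
  (List.finRange l).map fun k => (.inl k, .inl (k + ((m + 1 : ℕ) : Fin l)))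

@[simp] theorem length_rdCyc (m : ℕ) : (rdCyc l P m).length = l := by simp [rdCyc]

/-- State after all swaps and `m` circulation rounds. -/
def Rd (m : ℕ) : TState (LBAg l P) (LBIt l P) where
  own := fun i => match i with
    | .inl k => {.inl (k + ((m : ℕ) : Fin l))}
    | .inr (.inl k) => {.inr (.inl k)}
    | .inr (.inr x) => {.inr (.inr x)}
  dem := fun i => match i with
    | .inl k => (Finset.univ.image Sum.inl).filter
        (fun j => ∀ t : ℕ, t ≤ m → j ≠ .inl (k + ((t : ℕ) : Fin l)))
    | .inr (.inl _) => ∅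
    | .inr (.inr x) => LBD l P (.inr (.inr x))

theorem Sw_l_eq_Rd : Sw l P l = Rd l P 0 := by
  apply TState.ext' <;> intro i <;> rcases i with k | k | x
  · simp [Sw, Rd, k.isLt]
  · simp [Sw, Rd, k.isLt]
  · rfl
  · ext j
    simp only [Sw, Rd, k.isLt, if_pos, Finset.mem_erase, Finset.mem_filter, Nat.le_zero]
    constructor
    · rintro ⟨h1, h2⟩
      refine ⟨h2, ?_⟩
      rintro t rfl
      simpa using h1
    · rintro ⟨h1, h2⟩
      refine ⟨?_, h1⟩
      have := h2 0 rfl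
      simpa using this
  · simp [Sw, Rd, k.isLt]
  · rfl

theorem rot_finRange :
    (List.finRange l).rotate (l - 1) =
      (List.finRange l).map (fun k => k + (((l - 1 : ℕ) : ℕ) : Fin l)) := by
  have hl : 0 < l := NeZero.pos l
  apply List.ext_getElem
  · simp
  · intro i h1 h2
    simp only [List.length_rotate, List.length_finRange] at h1
    rw [List.getElem_rotate]
    simp only [List.length_finRange, List.getElem_map, List.getElem_finRange]
    apply Fin.ext
    simp only [Fin.coe_cast, Fin.add_def, Fin.val_cast_of_lt (show l - 1 < l by omega)]

theorem gives_rdCyc (m : ℕ) (hm : m + 1 < l) :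
    gives (rdCyc l P m) = (List.finRange l).map fun k => (.inl k, .inl (k + ((m : ℕ) : Fin l))) := by
  have hl : 0 < l := NeZero.pos l
  have hlen : (rdCyc l P m).length = l := by simp
  rw [gives, hlen, rdCyc, List.map_map, ← List.map_rotate, rot_finRange, List.map_map,
    List.map_map, List.zip_map']
  apply List.map_congr_left
  intro k _
  simp only [Function.comp]
  refine congrArg₂ Prod.mk rfl (congrArg Sum.inl ?_)
  apply Fin.ext
  simp only [Fin.add_def, Fin.val_cast_of_lt (show l - 1 < l by omega),
    Fin.val_cast_of_lt hm, Fin.val_cast_of_lt (show m < l by omega)]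
  rw [Nat.mod_add_mod]
  have : k.val + (l - 1) + (m + 1) = (k.val + m) + l := by omega
  rw [this, Nat.add_mod_right]

theorem mem_rdCyc {m : ℕ} {p : LBAg l P × LBIt l P} :
    p ∈ rdCyc l P m ↔ ∃ k : Fin l, p = (.inl k, .inl (k + ((m + 1 : ℕ) : Fin l))) := by
  simp only [rdCyc, List.mem_map, List.mem_finRange, true_and]
  constructor
  · rintro ⟨k, hk⟩; exact ⟨k, hk.symm⟩
  · rintro ⟨k, hk⟩; exact ⟨k, hk.symm⟩

theorem validCycle_rdCyc (m : ℕ) (hm : m + 1 < l) :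
    ValidCycle (Rd l P m) (rdCyc l P m) := by
  have hl : 0 < l := NeZero.pos l
  refine ⟨?_, ?_, ?_, ?_, ?_⟩
  · apply List.ne_nil_of_length_pos; simpa using hl
  · rw [rdCyc, List.map_map]
    exact (List.nodup_finRange l).map (fun a b h => by simpa using h)
  · rw [rdCyc, List.map_map]
    refine (List.nodup_finRange l).map (fun a b h => ?_)
    simp only [Function.comp] at h
    have := Sum.inl_injective h
    exact add_right_cancel this
  · intro p hp
    obtain ⟨k, rfl⟩ := (mem_rdCyc l P).1 hp
    simp only [Rd, Finset.mem_filter, Finset.mem_image, Finset.mem_univ, true_and]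
    refine ⟨⟨_, rfl⟩, ?_⟩
    intro t ht h
    have h2 := add_left_cancel (Sum.inl_injective h)
    have h3 : m + 1 = t := by
      have := congrArg Fin.val h2
      rwa [Fin.val_cast_of_lt hm, Fin.val_cast_of_lt (show t < l by omega)] at this
    omega
  · intro p hp
    rw [gives_rdCyc l P m hm] at hp
    simp only [List.mem_map, List.mem_finRange, true_and] at hp
    obtain ⟨k, hk⟩ := hp
    subst hk
    simp [Rd]

theorem step_rdCyc (m : ℕ) (hm : m + 1 < l) :
    stepCycle (Rd l P m) (rdCyc l P m) = Rd l P (m + 1) := by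
  have hl : 0 < l := NeZero.pos l
  have hgv : ∀ (i : LBAg l P) (j : LBIt l P),
      (i, j) ∈ gives (rdCyc l P m) ↔ ∃ k : Fin l, i = .inl k ∧ j = .inl (k + ((m : ℕ) : Fin l)) := by
    intro i j
    rw [gives_rdCyc l P m hm]
    simp only [List.mem_map, List.mem_finRange, true_and, Prod.mk.injEq]
    constructor
    · rintro ⟨k, hk1, hk2⟩; exact ⟨k, hk1.symm, hk2.symm⟩
    · rintro ⟨k, hk1, hk2⟩; exact ⟨k, hk1.symm, hk2.symm⟩
  apply TState.ext' <;> intro i <;> rcases i with k' | k' | x <;> ext j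
  · -- own, inl k'
    rw [mem_own_step]
    simp only [Rd, Finset.mem_singleton, hgv, mem_rdCyc]
    constructor
    · rintro (⟨h1, h2⟩ | ⟨p, ⟨k, rfl⟩, h1, h2⟩)
      · exact absurd ⟨k', rfl, h1⟩ h2
      · obtain rfl : k = k' := Sum.inl_injective h1
        exact h2.symm
    · rintro rfl
      exact Or.inr ⟨_, ⟨k', rfl⟩, rfl, rfl⟩
  · -- own, inr inl
    rw [mem_own_step]
    simp only [Rd, Finset.mem_singleton, hgv, mem_rdCyc]
    constructor
    · rintro (⟨h1, _⟩ | ⟨p, ⟨k, rfl⟩, h1, h2⟩)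
      · exact h1
      · simp at h1
    · intro h
      exact Or.inl ⟨h, by rintro ⟨k, hk, -⟩; simp at hk⟩
  · -- own, path
    rw [mem_own_step]
    simp only [Rd, Finset.mem_singleton, hgv, mem_rdCyc]
    constructor
    · rintro (⟨h1, _⟩ | ⟨p, ⟨k, rfl⟩, h1, h2⟩)
      · exact h1
      · simp at h1
    · intro h
      exact Or.inl ⟨h, by rintro ⟨k, hk, -⟩; simp at hk⟩
  · -- dem, inl k'
    rw [mem_dem_step]
    simp only [Rd, Finset.mem_filter]
    constructor
    · rintro ⟨⟨h1, h2⟩, h3⟩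
      refine ⟨h1, ?_⟩
      intro t ht
      rcases Nat.le_or_eq_of_le_succ ht with ht' | rfl
      · exact h2 t ht'
      · intro hj
        exact h3 ((mem_rdCyc l P).2 ⟨k', by rw [hj]⟩)
    · rintro ⟨h1, h2⟩
      refine ⟨⟨h1, fun t ht => h2 t (by omega)⟩, ?_⟩
      intro hc
      obtain ⟨k, hk⟩ := (mem_rdCyc l P).1 hc
      rw [Prod.ext_iff] at hk
      obtain ⟨hk1, hk2⟩ := hk
      obtain rfl := Sum.inl_injective hk1
      exact h2 (m + 1) le_rfl hk2
  · -- dem, inr inl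
    rw [mem_dem_step]
    simp [Rd]
  · -- dem, path
    rw [mem_dem_step]
    simp only [Rd]
    constructor
    · rintro ⟨h1, _⟩; exact h1
    · intro h
      refine ⟨h, fun hc => ?_⟩
      obtain ⟨k, hk⟩ := (mem_rdCyc l P).1 hc
      simp at hk

theorem exec_rounds : ∀ n m, m + n + 1 = l →
    ValidExec (Rd l P m) ((List.range n).map (fun j => rdCyc l P (m + j))) ∧
      (((List.range n).map (fun j => rdCyc l P (m + j))).foldl stepCycle (Rd l P m))
        = Rd l P (l - 1) := by
  intro n
  induction n with
  | zero =>
    intro m hm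
    have : m = l - 1 := by omega
    exact ⟨trivial, by rw [this]; rfl⟩
  | succ n ih =>
    intro m hm
    rw [List.range_succ_eq_map, List.map_cons, List.map_map]
    have hmap : (List.range n).map ((fun j => rdCyc l P (m + j)) ∘ Nat.succ)
        = (List.range n).map (fun j => rdCyc l P ((m + 1) + j)) := by
      apply List.map_congr_left
      intro a _
      simp only [Function.comp]
      congr 1
      omega
    have hvc := validCycle_rdCyc l P m (by omega)
    have hst := step_rdCyc l P m (by omega)
    obtain ⟨ih1, ih2⟩ := ih (m + 1) (by omega)
    rw [hmap]
    refine ⟨⟨by simpa using hvc, ?_⟩, ?_⟩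
    · rw [show m + 0 = m from rfl, hst]; exact ih1
    · simp only [List.foldl_cons, show m + 0 = m from rfl, hst]
      exact ih2

end rounds

/-- In the lower-bound instance (with path length
`P = ((l+1)/2)(l²+l)`), the optimal execution performs exactly `l² + l` exchanges,
any execution in which every agent receives at most one item performs at most `2l`
exchanges, and hence the ratio is at least `(l+1)/2`. -/
theorem stmt11 (l : ℕ) (hl : 1 ≤ l) :
    (∃ r : List (List (LBAg l (((l + 1) * (l * l + l)) / 2) ×
        LBIt l (((l + 1) * (l * l + l)) / 2))),
      ValidExec ⟨LBS l _, LBD l _⟩ r ∧ exchanges r = l * l + l) ∧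
    (∀ r : List (List (LBAg l (((l + 1) * (l * l + l)) / 2) ×
        LBIt l (((l + 1) * (l * l + l)) / 2))),
      ValidExec ⟨LBS l _, LBD l _⟩ r → exchanges r ≤ l * l + l) ∧
    (∀ r : List (List (LBAg l (((l + 1) * (l * l + l)) / 2) ×
        LBIt l (((l + 1) * (l * l + l)) / 2))),
      ValidExec ⟨LBS l _, LBD l _⟩ r → (∀ i, receivedCount r i ≤ 1) →
        exchanges r ≤ 2 * l) ∧
    2 * (l * l + l) = (l + 1) * (2 * l) := by
  haveI : NeZero l := ⟨by omega⟩
  set P := ((l + 1) * (l * l + l)) / 2 with hP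
  refine ⟨?_, fun r hv => part2 hl r hv, fun r hv h1 => part3 r hv h1, by ring⟩
  refine ⟨((List.finRange l).map (swCyc l P)) ++
      ((List.range (l - 1)).map (fun j => rdCyc l P (0 + j))), ?_, ?_⟩
  · rw [← Sw_zero l P, validExec_append]
    have hsw := exec_swaps l P l 0 (by omega)
    rw [List.drop_zero] at hsw
    refine ⟨hsw.1, ?_⟩
    rw [hsw.2, Sw_l_eq_Rd]
    exact (exec_rounds l P (l - 1) 0 (by omega)).1
  · rw [exchanges, List.map_append, List.sum_append]
    have h1 : (((List.finRange l).map (swCyc l P)).map List.length).sum = 2 * l := by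
      rw [List.map_map]
      have he : (List.length ∘ swCyc l P) = fun _ => 2 := by
        funext k; simp [Function.comp]
      rw [he, List.map_const', List.sum_replicate, smul_eq_mul]
      simp [Nat.mul_comm]
    have h2 : ((((List.range (l - 1)).map (fun j => rdCyc l P (0 + j))).map List.length)).sum
        = (l - 1) * l := by
      rw [List.map_map]
      have he : (List.length ∘ fun j => rdCyc l P (0 + j)) = fun _ => l := by
        funext k; simp [Function.comp]
      rw [he, List.map_const', List.sum_replicate, smul_eq_mul]
      simp
    rw [h1, h2]
    obtain ⟨d, rfl⟩ : ∃ d, l = 1 + d := ⟨l - 1, by omega⟩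
    simp only [Nat.add_sub_cancel_left]
    ring
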